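/- arXiv:2204.07287 — 2 statements merged into one kernel-verified Lean document; each statement's English description precedes it below -/
import Mathlib

section
/- If -6 < ξ < 6, then every complex root of 3z⁴ + ξz² + 3 = 0 has modulus 1. -/
/-- If -6 < ξ < 6, every complex root of 3z⁴ + ξz² + 3 = 0 has modulus 1. -/
theorem stmt_5 (ξ : ℝ) (hξ₁ : -6 < ξ) (hξ₂ : ξ < 6) (z : ℂ)
    (hz : 3*z^4 + (ξ : ℂ)*z^2 + 3 = 0) : ‖z‖ = 1 := by
  set w : ℂ := z^2 with hw
  have hq : 3*w^2 + (ξ : ℂ)*w + 3 = 0 := by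
    rw [hw]; ring_nf; ring_nf at hz; linear_combination hz
  have hqc : 3*(starRingEnd ℂ w)^2 + (ξ : ℂ)*(starRingEnd ℂ w) + 3 = 0 := by
    have := congrArg (starRingEnd ℂ) hq
    simpa [map_add, map_mul, map_pow, map_ofNat, Complex.conj_ofReal] using this
  have hne : w ≠ starRingEnd ℂ w := by
    intro h
    have hre : w = (w.re : ℂ) := (Complex.conj_eq_iff_re.mp h.symm).symm
    set r : ℝ := w.re
    have : 3*(r:ℂ)^2 + (ξ : ℂ)*(r:ℂ) + 3 = 0 := by rw [← hre]; exact hq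
    have hr : 3*r^2 + ξ*r + 3 = 0 := by exact_mod_cast this
    have hr0 : r ≠ 0 := by intro h0; rw [h0] at hr; norm_num at hr
    rcases lt_or_gt_of_ne hr0 with h0 | h0
    · nlinarith [sq_nonneg (r+1)]
    · nlinarith [sq_nonneg (r-1)]
  have hsum : 3*(w + starRingEnd ℂ w) = -(ξ : ℂ) := by
    have hd : 3*(w - starRingEnd ℂ w)*(w + starRingEnd ℂ w) + (ξ:ℂ)*(w - starRingEnd ℂ w) = 0 := by
      linear_combination hq - hqc
    have hsub : w - starRingEnd ℂ w ≠ 0 := sub_ne_zero.mpr hne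
    have : (w - starRingEnd ℂ w) * (3*(w + starRingEnd ℂ w) + (ξ:ℂ)) = 0 := by
      linear_combination hd
    rcases mul_eq_zero.mp this with h | h
    · exact absurd h hsub
    · linear_combination h
  have hprod : w * starRingEnd ℂ w = 1 := by
    linear_combination (w * hsum - hq) / 3
  have hnsq : Complex.normSq w = 1 := by
    have := hprod
    rw [Complex.mul_conj] at this
    exact_mod_cast this
  have habs : ‖w‖ = 1 := by
    rw [← Complex.sq_norm] at hnsq
    nlinarith [norm_nonneg w]
  have : ‖z‖ ^ 2 = 1 := by
    rw [← norm_pow]; exact habs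
  nlinarith [norm_nonneg z]
end

section
/- There exists a constant C > 0 such that for all t > 0 and all η ≥ 0, ∫₀^∞ e^{-t v²}/√|v - η| dv ≤ C·t^{-1/4}. -/
open MeasureTheory

lemma aux1 (c : ℝ) (hc : 0 ≤ c) :
    IntervalIntegrable (fun x : ℝ => (Real.sqrt |x|)⁻¹) volume 0 c ∧
      ∫ x in (0:ℝ)..c, (Real.sqrt |x|)⁻¹ = 2 * Real.sqrt c := by
  have hr : (-1:ℝ) < -(1:ℝ)/2 := by norm_num
  have heq : Set.EqOn (fun x : ℝ => (Real.sqrt |x|)⁻¹) (fun x : ℝ => x ^ (-(1:ℝ)/2))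
      (Set.uIcc (0:ℝ) c) := by
    intro x hx
    rw [Set.uIcc_of_le hc] at hx
    have hx0 : 0 ≤ x := hx.1
    simp only
    rw [abs_of_nonneg hx0, Real.sqrt_eq_rpow, ← Real.rpow_neg hx0]
    norm_num
  constructor
  · refine (intervalIntegral.intervalIntegrable_rpow' hr (a := 0) (b := c)).congr ?_
    intro x hx
    exact (heq (Set.uIoc_subset_uIcc hx)).symm
  · rw [intervalIntegral.integral_congr heq, integral_rpow (Or.inl hr)]
    have : (-(1:ℝ)/2 + 1) = 1/2 := by norm_num
    rw [this, Real.zero_rpow (by norm_num : (1:ℝ)/2 ≠ 0), ← Real.sqrt_eq_rpow]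
    ring

lemma aux2 (c : ℝ) (hc : 0 ≤ c) :
    IntervalIntegrable (fun x : ℝ => (Real.sqrt |x|)⁻¹) volume (-c) 0 ∧
      ∫ x in (-c:ℝ)..0, (Real.sqrt |x|)⁻¹ = 2 * Real.sqrt c := by
  constructor
  · have h := (IntervalIntegrable.iff_comp_neg (by simp)).mp (aux1 c hc).1
    simp only [abs_neg, neg_zero] at h
    exact h.symm
  · have h := intervalIntegral.integral_comp_neg (a := -c) (b := 0)
      (fun x : ℝ => (Real.sqrt |x|)⁻¹)
    simp only [abs_neg, neg_zero, neg_neg] at h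
    rw [h]
    exact (aux1 c hc).2

lemma aux3 (η δ : ℝ) (hδ : 0 < δ) :
    IntegrableOn (fun v : ℝ => (Real.sqrt |v - η|)⁻¹) (Set.Ioo (η - δ) (η + δ)) volume ∧
      ∫ v in Set.Ioo (η - δ) (η + δ), (Real.sqrt |v - η|)⁻¹ = 4 * Real.sqrt δ := by
  have hab : η - δ ≤ η + δ := by linarith
  have hII : IntervalIntegrable (fun x : ℝ => (Real.sqrt |x|)⁻¹) volume (-δ) δ :=
    (aux2 δ hδ.le).1.trans (aux1 δ hδ.le).1
  have hIIt : IntervalIntegrable (fun v : ℝ => (Real.sqrt |v - η|)⁻¹) volume (η - δ) (η + δ) := by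
    have h := hII.comp_sub_right η
    have e1 : -δ + η = η - δ := by ring
    have e2 : δ + η = η + δ := by ring
    rwa [e1, e2] at h
  refine ⟨((intervalIntegrable_iff_integrableOn_Ioc_of_le hab).mp hIIt).mono_set
    Set.Ioo_subset_Ioc_self, ?_⟩
  rw [← integral_Ioc_eq_integral_Ioo, ← intervalIntegral.integral_of_le hab]
  have h := intervalIntegral.integral_comp_sub_right (a := η - δ) (b := η + δ)
    (fun x : ℝ => (Real.sqrt |x|)⁻¹) η
  have e1 : η - δ - η = -δ := by ring
  have e2 : η + δ - η = δ := by ring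
  rw [e1, e2] at h
  rw [h, ← intervalIntegral.integral_add_adjacent_intervals (aux2 δ hδ.le).1 (aux1 δ hδ.le).1,
    (aux2 δ hδ.le).2, (aux1 δ hδ.le).2]
  ring

/-- There is a constant C > 0 such that for all t > 0 and η ≥ 0,
∫₀^∞ e^{-t v²}/√|v - η| dv ≤ C·t^{-1/4}. -/
theorem stmt_11 :
    ∃ C > 0, ∀ t : ℝ, 0 < t → ∀ η : ℝ, 0 ≤ η →
      ∫ v in Set.Ioi (0:ℝ), Real.exp (-t * v^2) / Real.sqrt |v - η| ≤
        C * t ^ (-(1:ℝ)/4) := by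
  refine ⟨4 + Real.sqrt Real.pi / 2, by positivity, ?_⟩
  intro t ht η hη
  set δ : ℝ := t ^ (-(1:ℝ)/2) with hδdef
  have hδ : 0 < δ := Real.rpow_pos_of_pos ht _
  have hsqrtδ : Real.sqrt δ = t ^ (-(1:ℝ)/4) := by
    rw [hδdef, Real.sqrt_eq_rpow, ← Real.rpow_mul ht.le]
    norm_num
  have hinvδ : (Real.sqrt δ)⁻¹ = t ^ ((1:ℝ)/4) := by
    rw [hsqrtδ, show (-(1:ℝ)/4) = -((1:ℝ)/4) by ring, Real.rpow_neg ht.le, inv_inv]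
  set g : ℝ → ℝ := fun v => t ^ ((1:ℝ)/4) * Real.exp (-t * v ^ 2) with hgdef
  set h : ℝ → ℝ :=
    Set.indicator (Set.Ioo (η - δ) (η + δ)) (fun v => (Real.sqrt |v - η|)⁻¹) with hhdef
  have hg_int : Integrable g := (integrable_exp_neg_mul_sq ht).const_mul _
  have hh_int : Integrable h :=
    (integrable_indicator_iff measurableSet_Ioo).mpr (aux3 η δ hδ).1
  have hh0 : ∀ v, 0 ≤ h v :=
    fun v => Set.indicator_nonneg (fun x _ => by positivity) v
  have hbound : ∀ v : ℝ, Real.exp (-t * v ^ 2) / Real.sqrt |v - η| ≤ h v + g v := by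
    intro v
    have hg0 : 0 ≤ g v := by positivity
    rcases lt_or_ge |v - η| δ with hc | hc
    · have hv : v ∈ Set.Ioo (η - δ) (η + δ) := by
        rw [Set.mem_Ioo]
        obtain ⟨h1, h2⟩ := abs_lt.mp hc
        constructor <;> linarith
      have hhv : h v = (Real.sqrt |v - η|)⁻¹ := Set.indicator_of_mem hv _
      have he : Real.exp (-t * v ^ 2) ≤ 1 := by
        rw [Real.exp_le_one_iff]
        nlinarith [sq_nonneg v]
      have hi : (0:ℝ) ≤ (Real.sqrt |v - η|)⁻¹ := by positivity
      calc Real.exp (-t * v ^ 2) / Real.sqrt |v - η|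
          = Real.exp (-t * v ^ 2) * (Real.sqrt |v - η|)⁻¹ := div_eq_mul_inv _ _
        _ ≤ 1 * (Real.sqrt |v - η|)⁻¹ := mul_le_mul_of_nonneg_right he hi
        _ = h v := by rw [one_mul, hhv]
        _ ≤ h v + g v := le_add_of_nonneg_right hg0
    · have hs : Real.sqrt δ ≤ Real.sqrt |v - η| := Real.sqrt_le_sqrt hc
      have hi : (Real.sqrt |v - η|)⁻¹ ≤ (Real.sqrt δ)⁻¹ := by
        apply inv_anti₀ (Real.sqrt_pos.mpr hδ) hs
      calc Real.exp (-t * v ^ 2) / Real.sqrt |v - η|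
          = Real.exp (-t * v ^ 2) * (Real.sqrt |v - η|)⁻¹ := div_eq_mul_inv _ _
        _ ≤ Real.exp (-t * v ^ 2) * (Real.sqrt δ)⁻¹ :=
            mul_le_mul_of_nonneg_left hi (Real.exp_pos _).le
        _ = g v := by rw [hinvδ, hgdef]; ring
        _ ≤ h v + g v := le_add_of_nonneg_left (hh0 v)
  have step1 : ∫ v in Set.Ioi (0:ℝ), Real.exp (-t * v ^ 2) / Real.sqrt |v - η| ≤
      ∫ v in Set.Ioi (0:ℝ), (h v + g v) := by
    refine integral_mono_of_nonneg ?_ ((hh_int.add hg_int).restrict) ?_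
    · exact Filter.Eventually.of_forall fun v =>
        div_nonneg (Real.exp_pos _).le (Real.sqrt_nonneg _)
    · exact Filter.Eventually.of_forall fun v => hbound v
  have step2 : ∫ v in Set.Ioi (0:ℝ), (h v + g v) =
      (∫ v in Set.Ioi (0:ℝ), h v) + ∫ v in Set.Ioi (0:ℝ), g v :=
    integral_add hh_int.restrict hg_int.restrict
  have step3 : ∫ v in Set.Ioi (0:ℝ), h v ≤ 4 * t ^ (-(1:ℝ)/4) := by
    calc ∫ v in Set.Ioi (0:ℝ), h v ≤ ∫ v, h v :=
          setIntegral_le_integral hh_int (Filter.Eventually.of_forall hh0)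
      _ = ∫ v in Set.Ioo (η - δ) (η + δ), (Real.sqrt |v - η|)⁻¹ := by
          rw [hhdef, integral_indicator measurableSet_Ioo]
      _ = 4 * Real.sqrt δ := (aux3 η δ hδ).2
      _ = 4 * t ^ (-(1:ℝ)/4) := by rw [hsqrtδ]
  have step4 : ∫ v in Set.Ioi (0:ℝ), g v = Real.sqrt Real.pi / 2 * t ^ (-(1:ℝ)/4) := by
    rw [hgdef]
    simp only
    rw [integral_const_mul, integral_gaussian_Ioi]
    rw [show Real.pi / t = Real.pi * t⁻¹ by ring, Real.sqrt_mul Real.pi_pos.le,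
      Real.sqrt_inv, Real.sqrt_eq_rpow t, ← Real.rpow_neg_one (t ^ ((1:ℝ)/2)),
      ← Real.rpow_mul ht.le]
    rw [show t ^ ((1:ℝ)/4) * (Real.sqrt Real.pi * t ^ ((1:ℝ)/2 * -1) / 2)
        = Real.sqrt Real.pi / 2 * (t ^ ((1:ℝ)/4) * t ^ ((1:ℝ)/2 * -1)) by ring,
      ← Real.rpow_add ht]
    norm_num
  rw [step2] at step1
  calc ∫ v in Set.Ioi (0:ℝ), Real.exp (-t * v ^ 2) / Real.sqrt |v - η| ≤ _ := step1
    _ ≤ 4 * t ^ (-(1:ℝ)/4) + Real.sqrt Real.pi / 2 * t ^ (-(1:ℝ)/4) := by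
        rw [step4]; exact add_le_add_left step3 _
    _ = (4 + Real.sqrt Real.pi / 2) * t ^ (-(1:ℝ)/4) := by ring
end
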